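/- If x and y are nondegenerate simplices of a simplicial set X (possibly of different dimensions), and Sx = Ty where S and T are compositions of degeneracy operators, then x = y. -/

import Mathlib

open CategoryTheory Simplicial Opposite

/-- A simplex of a simplicial set is degenerate if it is of the form `s_i y` for some
degeneracy map `s_i`. -/
def SSet.IsDegenerate (X : SSet) : ∀ {n : ℕ}, X.obj (op (SimplexCategory.mk n)) → Prop :=
  fun {n} x => match n, x with
  | 0, _ => False
  | _ + 1, x => ∃ i y, x = SimplicialObject.σ X i y

/-- If `x` is nondegenerate and `x = X.map f.op z`, then `f` is injective. -/
lemma injective_of_nondegenerate (X : SSet) {m k : ℕ}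
    (x : X.obj (op (SimplexCategory.mk m))) (hx : ¬ X.IsDegenerate x)
    (z : X.obj (op (SimplexCategory.mk k)))
    (f : SimplexCategory.mk m ⟶ SimplexCategory.mk k)
    (hxz : x = X.map f.op z) : Function.Injective f.toOrderHom := by
  by_contra hf
  cases m with
  | zero =>
    refine hf (fun a b _ => Fin.ext ?_)
    have ha : (a : ℕ) = 0 := Nat.lt_one_iff.1 (by simpa using a.isLt)
    have hb : (b : ℕ) = 0 := Nat.lt_one_iff.1 (by simpa using b.isLt)
    omega
  | succ n =>
    obtain ⟨i, g, hg⟩ := SimplexCategory.eq_σ_comp_of_not_injective f hf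
    refine hx ⟨i, X.map g.op z, ?_⟩
    rw [hxz, hg, op_comp, X.map_comp]
    rfl

/-- If `x` and `y` are nondegenerate simplices of a simplicial set `X` (possibly of different
dimensions) and `S x = T y` for compositions `S`, `T` of degeneracy operators (i.e. `X` applied
to surjections of the simplex category), then `x = y` (in particular the dimensions agree). -/
theorem nondegenerate_eq_of_degeneracies_eq (X : SSet) {m m' N : ℕ}
    (x : X.obj (op (SimplexCategory.mk m))) (y : X.obj (op (SimplexCategory.mk m')))
    (hx : ¬ X.IsDegenerate x) (hy : ¬ X.IsDegenerate y)
    (g : SimplexCategory.mk N ⟶ SimplexCategory.mk m)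
    (h : SimplexCategory.mk N ⟶ SimplexCategory.mk m')
    (hg : Function.Surjective g.toOrderHom) (hh : Function.Surjective h.toOrderHom)
    (e : X.map g.op x = X.map h.op y) :
    m = m' ∧ HEq x y := by
  have hgE : Epi g := SimplexCategory.epi_iff_surjective.2 hg
  have hhE : Epi h := SimplexCategory.epi_iff_surjective.2 hh
  haveI := isSplitEpi_of_epi g
  haveI := isSplitEpi_of_epi h
  have hg' : section_ g ≫ g = 𝟙 _ := IsSplitEpi.id g
  have hh' : section_ h ≫ h = 𝟙 _ := IsSplitEpi.id h
  have hxy : x = X.map (section_ g ≫ h).op y := by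
    have : x = X.map (section_ g ≫ g).op x := by rw [hg']; simp
    rw [op_comp, X.map_comp] at this ⊢
    simp only [types_comp_apply] at this ⊢
    rw [this, e]
  have hyx : y = X.map (section_ h ≫ g).op x := by
    have : y = X.map (section_ h ≫ h).op y := by rw [hh']; simp
    rw [op_comp, X.map_comp] at this ⊢
    simp only [types_comp_apply] at this ⊢
    rw [this, e]
  have h1 : Function.Injective (section_ g ≫ h).toOrderHom :=
    injective_of_nondegenerate X x hx y _ hxy
  have h2 : Function.Injective (section_ h ≫ g).toOrderHom :=
    injective_of_nondegenerate X y hy x _ hyx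
  have hle1 : m ≤ m' := by
    simpa using Fintype.card_le_of_injective _ h1
  have hle2 : m' ≤ m := by
    simpa using Fintype.card_le_of_injective _ h2
  obtain rfl : m = m' := le_antisymm hle1 hle2
  have : Mono (section_ g ≫ h) := SimplexCategory.mono_iff_injective.2 h1
  rw [SimplexCategory.eq_id_of_mono (section_ g ≫ h)] at hxy
  simp at hxy
  exact ⟨rfl, heq_of_eq hxy⟩
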